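/- arXiv:1810.07965 — 2 statements merged into one kernel-verified Lean document; each statement's English description precedes it below -/
import Mathlib

section
/- First Lommel integral for spherical Bessel functions with complex argument: if k ∈ ℂ with Im(k²) ≠ 0 and s_l is any solution of the spherical Bessel equation of order l, then d/dr [ r² · Im{ k · s_{l+1}(kr) · conj(s_l(kr)) } / Im(k²) ] = |s_l(kr)|² r², i.e., ∫₀^a |s_l(kr)|² r² dr = a² Im{k s_{l+1}(ka) conj(s_l(ka))}/Im(k²) (when s_l is regular at 0). -/
open Complex intervalIntegral

/-- First Lommel integral for spherical Bessel functions with complex wavenumber `k`,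
`Im(k²) ≠ 0`: for any differentiable family `s : ℕ → ℂ → ℂ` satisfying the spherical
Bessel recurrences, the function `r ↦ r² Im(k s_{l+1}(kr) conj(s_l(kr)))/Im(k²)` is an
antiderivative of `r ↦ |s_l(kr)|² r²`, and hence (by regularity at `0`)
`∫₀^a |s_l(kr)|² r² dr = a² Im(k s_{l+1}(ka) conj(s_l(ka)))/Im(k²)`. -/
theorem lommel_first_integral (s : ℕ → ℂ → ℂ)
    (hdiff : ∀ n, Differentiable ℂ (s n))
    (hrec1 : ∀ (n : ℕ) (z : ℂ), z ≠ 0 →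
      deriv (s n) z = (n : ℂ) / z * s n z - s (n + 1) z)
    (hrec2 : ∀ (n : ℕ) (z : ℂ), z ≠ 0 →
      s n z + s (n + 2) z = (2 * (n : ℂ) + 3) / z * s (n + 1) z)
    (k : ℂ) (hk : (k ^ 2).im ≠ 0) (l : ℕ) :
    (∀ r : ℝ, r ≠ 0 →
      HasDerivAt
        (fun t : ℝ => t ^ 2 *
          (k * s (l + 1) (k * t) * (starRingEnd ℂ) (s l (k * t))).im / (k ^ 2).im)
        (‖s l (k * r)‖ ^ 2 * r ^ 2) r) ∧
    ∀ a : ℝ,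
      ∫ r in (0:ℝ)..a, ‖s l (k * r)‖ ^ 2 * r ^ 2
        = a ^ 2 * (k * s (l + 1) (k * a) * (starRingEnd ℂ) (s l (k * a))).im
            / (k ^ 2).im := by
  have hk0 : k ≠ 0 := by
    rintro rfl; simp at hk
  -- the master derivative statement, valid at every point
  have key : ∀ r : ℝ,
      HasDerivAt
        (fun t : ℝ => t ^ 2 *
          (k * s (l + 1) (k * t) * (starRingEnd ℂ) (s l (k * t))).im / (k ^ 2).im)
        (‖s l (k * r)‖ ^ 2 * r ^ 2) r := by
    intro r
    have hof : HasDerivAt (fun t : ℝ => (t:ℂ)) 1 r := Complex.ofRealCLM.hasDerivAt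
    have hkt : HasDerivAt (fun t : ℝ => k * (t:ℂ)) k r := by
      simpa using hof.const_mul k
    have hpow : HasDerivAt (fun t : ℝ => (t:ℂ)^2) (2*(r:ℂ)) r := by
      have h : HasDerivAt (fun t : ℝ => (t:ℂ) * (t:ℂ)) (1 * (r:ℂ) + (r:ℂ) * 1) r := hof.mul hof
      have e1 : (fun t : ℝ => (t:ℂ) * (t:ℂ)) = fun t : ℝ => (t:ℂ)^2 := by ext t; ring
      have e2 : (1 : ℂ) * (r:ℂ) + (r:ℂ) * 1 = 2*(r:ℂ) := by ring
      rw [e1, e2] at h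
      exact h
    have hB : HasDerivAt (fun t : ℝ => s (l+1) (k * t)) (deriv (s (l+1)) (k*r) * k) r :=
      ((hdiff (l+1) (k*r)).hasDerivAt).comp r hkt
    have hA : HasDerivAt (fun t : ℝ => s l (k * t)) (deriv (s l) (k*r) * k) r :=
      ((hdiff l (k*r)).hasDerivAt).comp r hkt
    have hAc : HasDerivAt (fun t : ℝ => (starRingEnd ℂ) (s l (k * t)))
        ((starRingEnd ℂ) (deriv (s l) (k*r) * k)) r := by
      simpa [Complex.star_def] using hA.star
    set A : ℂ := s l (k*r) with hAdef
    set B : ℂ := s (l+1) (k*r) with hBdef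
    have hG : HasDerivAt
        (fun t : ℝ => ((t:ℂ))^2 * (k * s (l+1) (k * t) * (starRingEnd ℂ) (s l (k * t))))
        ((2*(r:ℂ)) * (k * B * (starRingEnd ℂ) A)
          + (r:ℂ)^2 * ((k * (deriv (s (l+1)) (k*r) * k)) * (starRingEnd ℂ) A
              + (k * B) * (starRingEnd ℂ) (deriv (s l) (k*r) * k))) r :=
      hpow.mul ((hB.const_mul k).mul hAc)
    -- the derivative value simplifies
    have hval : (2*(r:ℂ)) * (k * B * (starRingEnd ℂ) A)
          + (r:ℂ)^2 * ((k * (deriv (s (l+1)) (k*r) * k)) * (starRingEnd ℂ) A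
              + (k * B) * (starRingEnd ℂ) (deriv (s l) (k*r) * k))
        = (r:ℂ)^2 * (k^2 * (A * (starRingEnd ℂ) A)
            - (k * (starRingEnd ℂ) k) * (B * (starRingEnd ℂ) B)) := by
      rcases eq_or_ne r 0 with rfl | hr
      · simp
      · have hkr : k * (r:ℂ) ≠ 0 := by
          exact mul_ne_zero hk0 (by exact_mod_cast hr)
        have hA' : deriv (s l) (k*r) = (l:ℂ)/(k*r) * A - B := hrec1 l (k*r) hkr
        have hB' : deriv (s (l+1)) (k*r)
            = ((l:ℂ)+1)/(k*r) * B - ((2*(l:ℂ)+3)/(k*r) * B - A) := by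
          have h1 := hrec1 (l+1) (k*r) hkr
          have h2 := hrec2 l (k*r) hkr
          have hC : s (l+1+1) (k*r) = (2*(l:ℂ)+3)/(k*r) * B - A := by
            have : s (l+2) (k*r) = (2*(l:ℂ)+3)/(k*r) * B - A := by
              rw [eq_sub_iff_add_eq, add_comm]
              simpa using h2
            simpa [show l+1+1 = l+2 from rfl] using this
          rw [h1, hC, ← hBdef]
          push_cast
          ring
        have hk' : (starRingEnd ℂ) k ≠ 0 := by simpa using hk0
        have hr' : (r:ℂ) ≠ 0 := by exact_mod_cast hr
        rw [hA', hB']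
        simp only [map_sub, map_mul, map_div₀, Complex.conj_ofReal, map_natCast, map_add,
          map_ofNat, map_one]
        field_simp
        ring
    rw [hval] at hG
    have hIm := Complex.imCLM.hasFDerivAt.comp_hasDerivAt r hG
    have hdiv := hIm.div_const ((k^2).im)
    simp only [Function.comp_def, ContinuousLinearMap.coe_coe, Complex.imCLM_apply] at hdiv
    have hfun : (fun t : ℝ =>
          ((((t:ℂ))^2 * (k * s (l+1) (k * t) * (starRingEnd ℂ) (s l (k * t)))).im) / (k^2).im)
        = (fun t : ℝ => t ^ 2 *
          (k * s (l + 1) (k * t) * (starRingEnd ℂ) (s l (k * t))).im / (k ^ 2).im) := by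
      ext t
      simp [← Complex.ofReal_pow, Complex.im_ofReal_mul]
    rw [hfun] at hdiv
    refine hdiv.congr_deriv ?_
    symm
    -- value equality
    have h1 : (r:ℂ)^2 * (k^2 * (A * (starRingEnd ℂ) A)
        - (k * (starRingEnd ℂ) k) * (B * (starRingEnd ℂ) B))
        = ((r^2 : ℝ) : ℂ) * ((Complex.normSq A : ℂ) * k^2
            - ((Complex.normSq k * Complex.normSq B : ℝ) : ℂ)) := by
      rw [Complex.mul_conj, Complex.mul_conj, Complex.mul_conj]
      push_cast
      ring
    rw [h1, Complex.im_ofReal_mul, Complex.sub_im, Complex.ofReal_im,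
      Complex.im_ofReal_mul, ← Complex.sq_norm]
    field_simp
    ring
  refine ⟨fun r _ => key r, fun a => ?_⟩
  have hcont : Continuous (fun r : ℝ => ‖s l (k * r)‖ ^ 2 * r ^ 2) := by
    have : Continuous (fun r : ℝ => s l (k * r)) :=
      (hdiff l).continuous.comp (by continuity)
    continuity
  have hint : IntervalIntegrable (fun r : ℝ => ‖s l (k * r)‖ ^ 2 * r ^ 2)
      MeasureTheory.volume 0 a := hcont.intervalIntegrable 0 a
  have := intervalIntegral.integral_eq_sub_of_hasDerivAt
    (f := fun t : ℝ => t ^ 2 *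
      (k * s (l + 1) (k * t) * (starRingEnd ℂ) (s l (k * t))).im / (k ^ 2).im)
    (fun t _ => key t) hint
  rw [this]
  simp
end

section
/- Leading-order pole of the Mie denominator: the function f_l(ε, √ε_b, k₀a) = i(k_b a)^l ξ_l(k_b a)(ka)^{-l} ψ_l′(ka)·ε_b − i(ka)^{-l-1} ψ_l(ka)(k_b a)^{l+1} ξ_l′(k_b a)·ε, with k = k₀√ε и k_b = k₀√ε_b, satisfies f_l(ε, √ε_b, 0) = (l/(2l+1))·ε + ((l+1)/(2l+1))·ε_b, i.e., its limit as k₀a → 0 equals (l ε + (l+1) ε_b)/(2l+1). -/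
open Complex

/-- The operator `(1/z) d/dz` acting on functions `ℂ → ℂ`. -/
noncomputable def besselOp (f : ℂ → ℂ) : ℂ → ℂ := fun z => deriv f z / z

/-- Spherical Bessel function of the first kind, via the Rayleigh formula
`j_l(z) = (-z)^l (z⁻¹ d/dz)^l (sin z / z)`. -/
noncomputable def sphJ (l : ℕ) (z : ℂ) : ℂ :=
  (-z) ^ l * (besselOp^[l] (fun w => Complex.sin w / w)) z

/-- Spherical Bessel function of the second kind, via the Rayleigh formula
`y_l(z) = -(-z)^l (z⁻¹ d/dz)^l (cos z / z)`. -/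
noncomputable def sphY (l : ℕ) (z : ℂ) : ℂ :=
  -(-z) ^ l * (besselOp^[l] (fun w => Complex.cos w / w)) z

/-- Riccati–Bessel function `ψ_l(z) = z j_l(z)`. -/
noncomputable def riccatiPsi (l : ℕ) (z : ℂ) : ℂ := z * sphJ l z

/-- Riccati–Bessel function `ξ_l(z) = z h_l^{(1)}(z) = z (j_l(z) + i y_l(z))`. -/
noncomputable def riccatiXi (l : ℕ) (z : ℂ) : ℂ := z * (sphJ l z + Complex.I * sphY l z)

open Filter Topology

/-- Principal branch complex square root. -/
noncomputable def csqrt (z : ℂ) : ℂ := z ^ ((1 : ℂ) / 2)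

namespace MieAux


/-- Entire power series from coefficients. -/
noncomputable def pser (c : ℕ → ℂ) : ℂ → ℂ := fun w => ∑' n, c n * w ^ n

/-- Coefficients of the derivative series. -/
noncomputable def shiftc (c : ℕ → ℂ) : ℕ → ℂ := fun n => ((n : ℂ) + 1) * c (n + 1)

/-- Entire-type growth condition on coefficients. -/
def EntC (c : ℕ → ℂ) : Prop := ∀ r : ℝ, 0 ≤ r → Summable (fun n => ‖c n‖ * r ^ n)

theorem EntC.summable {c : ℕ → ℂ} (hc : EntC c) (w : ℂ) :
    Summable (fun n => c n * w ^ n) := by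
  refine Summable.of_norm ?_
  have := hc ‖w‖ (norm_nonneg w)
  simpa [norm_mul, norm_pow] using this

theorem aux_nat_bound (n : ℕ) (r : ℝ) (hr : 0 ≤ r) :
    (n : ℝ) * r ^ n ≤ (2 * r + 2) ^ n := by
  have h1 : (n : ℝ) ≤ 2 ^ n := by
    exact_mod_cast (Nat.lt_two_pow_self (n := n)).le
  have h2 : r ^ n ≤ (r + 1) ^ n := pow_le_pow_left₀ hr (by linarith) n
  calc (n : ℝ) * r ^ n ≤ 2 ^ n * (r + 1) ^ n := by
        apply mul_le_mul h1 h2 (by positivity) (by positivity)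
    _ = (2 * r + 2) ^ n := by rw [← mul_pow]; ring_nf

theorem EntC.mul_nat {c : ℕ → ℂ} (hc : EntC c) : EntC (fun n => (n : ℂ) * c n) := by
  intro r hr
  apply Summable.of_nonneg_of_le (fun n => by positivity) ?_ (hc (2 * r + 2) (by linarith))
  intro n
  simp only [norm_mul, Complex.norm_natCast]
  calc (n : ℝ) * ‖c n‖ * r ^ n = ‖c n‖ * ((n : ℝ) * r ^ n) := by ring
    _ ≤ ‖c n‖ * (2 * r + 2) ^ n :=
        mul_le_mul_of_nonneg_left (aux_nat_bound n r hr) (norm_nonneg _)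

theorem EntC.shift {c : ℕ → ℂ} (hc : EntC c) : EntC (shiftc c) := by
  intro r hr
  have base : Summable (fun n : ℕ => (((n : ℝ) + 1) * ‖c (n + 1)‖) * ((2 * r + 2) ^ (n + 1))) := by
    have h1 := (hc.mul_nat (2 * r + 2) (by linarith)).comp_injective (add_left_injective 1)
    refine h1.congr fun n => ?_
    simp only [Function.comp_apply, norm_mul, Complex.norm_natCast]
    push_cast
    ring
  apply Summable.of_nonneg_of_le (fun n => by positivity) ?_ base
  intro n
  have hn : ‖shiftc c n‖ = ((n : ℝ) + 1) * ‖c (n + 1)‖ := by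
    unfold shiftc
    rw [norm_mul, show ((n : ℂ) + 1) = ((n + 1 : ℕ) : ℂ) by push_cast; ring,
      Complex.norm_natCast]
    push_cast; ring
  rw [hn]
  apply mul_le_mul_of_nonneg_left ?_ (by positivity)
  calc r ^ n ≤ (2 * r + 2) ^ n := pow_le_pow_left₀ hr (by linarith) n
    _ ≤ (2 * r + 2) ^ (n + 1) := pow_le_pow_right₀ (by linarith) (Nat.le_succ n)

theorem pser_zero (c : ℕ → ℂ) : pser c 0 = c 0 := by
  unfold pser
  rw [tsum_eq_single 0]
  · simp
  · intro n hn; simp [zero_pow hn]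

theorem EntC.hasDerivAt {c : ℕ → ℂ} (hc : EntC c) (w : ℂ) :
    HasDerivAt (pser c) (pser (shiftc c) w) w := by
  set R : ℝ := ‖w‖ + 1 with hR
  have hR1 : 1 ≤ R := by have := norm_nonneg w; simp only [hR]; linarith
  have hR0 : 0 < R := by linarith
  have hboundR : ∀ y : ℂ, ‖y‖ ≤ R → ∀ n : ℕ,
      ‖c n * ((n : ℂ) * y ^ (n - 1))‖ ≤ (n : ℝ) * ‖c n‖ * R ^ n := by
    intro y hy n
    rw [norm_mul, norm_mul, Complex.norm_natCast, norm_pow]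
    calc ‖c n‖ * ((n : ℝ) * ‖y‖ ^ (n - 1))
        ≤ ‖c n‖ * ((n : ℝ) * R ^ n) := by
          apply mul_le_mul_of_nonneg_left ?_ (norm_nonneg _)
          apply mul_le_mul_of_nonneg_left ?_ (Nat.cast_nonneg n)
          calc ‖y‖ ^ (n - 1) ≤ R ^ (n - 1) := pow_le_pow_left₀ (norm_nonneg _) hy _
            _ ≤ R ^ n := pow_le_pow_right₀ hR1 (Nat.sub_le n 1)
      _ = (n : ℝ) * ‖c n‖ * R ^ n := by ring
  have husum : Summable (fun n : ℕ => (n : ℝ) * ‖c n‖ * R ^ n) := by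
    have := hc.mul_nat R hR0.le
    refine this.congr fun n => ?_
    rw [norm_mul, Complex.norm_natCast]
  have key : HasDerivAt (fun z => ∑' n, c n * z ^ n)
      (∑' n, c n * ((n : ℂ) * w ^ (n - 1))) w := by
    apply hasDerivAt_tsum_of_isPreconnected
      (u := fun n : ℕ => (n : ℝ) * ‖c n‖ * R ^ n)
      (g' := fun (n : ℕ) (y : ℂ) => c n * ((n : ℂ) * y ^ (n - 1)))
      (t := Metric.ball (0 : ℂ) R) (y₀ := 0)
      husum Metric.isOpen_ball ((convex_ball (0 : ℂ) R).isPreconnected) ?_ ?_ ?_ ?_ ?_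
    · intro n y _
      exact (hasDerivAt_pow n y).const_mul (c n)
    · intro n y hy
      apply hboundR
      have := mem_ball_iff_norm.mp hy
      simp only [sub_zero] at this
      linarith
    · simp [hR0]
    · exact hc.summable 0
    · simp [hR]
  have hsum : Summable (fun n => c n * ((n : ℂ) * w ^ (n - 1))) := by
    apply Summable.of_norm
    apply Summable.of_nonneg_of_le (fun n => norm_nonneg _)
      (hboundR w (by simp [hR]) ) husum
  have : (∑' n, c n * ((n : ℂ) * w ^ (n - 1))) = pser (shiftc c) w := by
    rw [Summable.tsum_eq_zero_add hsum]
    simp only [Nat.cast_zero, zero_mul, mul_zero, zero_add]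
    unfold pser shiftc
    apply tsum_congr
    intro n
    push_cast
    ring
  rw [this] at key
  exact key

theorem EntC.differentiable {c : ℕ → ℂ} (hc : EntC c) : Differentiable ℂ (pser c) :=
  fun w => (hc.hasDerivAt w).differentiableAt

theorem pser_smul (k : ℂ) (c : ℕ → ℂ) (w : ℂ) :
    pser (fun n => k * c n) w = k * pser c w := by
  unfold pser
  rw [← tsum_mul_left]
  apply tsum_congr; intro n; ring

theorem pser_mul_X {c : ℕ → ℂ} (hc : EntC c) (w : ℂ) :
    w * pser (shiftc c) w = pser (fun n => (n : ℂ) * c n) w := by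
  unfold pser
  rw [← tsum_mul_left]
  rw [Summable.tsum_eq_zero_add (hc.mul_nat.summable w)]
  simp only [Nat.cast_zero, zero_mul, zero_add]
  apply tsum_congr; intro n
  unfold shiftc
  push_cast
  ring


/-- Coefficients of the entire function `u_l` with `j_l(z) = z^l u_l(z^2)` (up to sign). -/
noncomputable def cu : ℕ → ℕ → ℂ
  | 0 => fun n => (-1) ^ n / ((2 * n + 1).factorial : ℂ)
  | (l + 1) => fun n => 2 * shiftc (cu l) n

/-- Coefficients of the entire function `v_l` with `y_l(z) = -v_l(z^2)/z^(l+1)` (up to sign). -/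
noncomputable def cv : ℕ → ℕ → ℂ
  | 0 => fun n => (-1) ^ n / ((2 * n).factorial : ℂ)
  | (l + 1) => fun n => (2 * (n : ℂ) - 2 * l - 1) * cv l n

theorem entc_cu (l : ℕ) : EntC (cu l) := by
  induction l with
  | zero =>
      intro r hr
      apply Summable.of_nonneg_of_le (fun n => by positivity) ?_
        (Real.summable_pow_div_factorial r)
      intro n
      show ‖cu 0 n‖ * r ^ n ≤ r ^ n / (n.factorial : ℝ)
      have : ‖cu 0 n‖ = 1 / ((2 * n + 1).factorial : ℝ) := by
        simp [cu, norm_div, norm_pow]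
      rw [this]
      rw [div_mul_eq_mul_div, one_mul, div_le_div_iff₀ (by positivity) (by positivity)]
      have hf : (n.factorial : ℝ) ≤ ((2 * n + 1).factorial : ℝ) := by
        exact_mod_cast Nat.factorial_le (by omega)
      calc r ^ n * (n.factorial : ℝ) ≤ r ^ n * ((2 * n + 1).factorial : ℝ) := by
            apply mul_le_mul_of_nonneg_left hf (by positivity)
        _ = r ^ n * ((2 * n + 1).factorial : ℝ) := rfl
  | succ l ih =>
      intro r hr
      have := (ih.shift) r hr
      refine (this.mul_left 2).congr fun n => ?_
      show 2 * (‖shiftc (cu l) n‖ * r ^ n) = ‖cu (l + 1) n‖ * r ^ n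
      rw [show cu (l + 1) n = 2 * shiftc (cu l) n from rfl, norm_mul]
      simp
      ring

theorem entc_cv (l : ℕ) : EntC (cv l) := by
  induction l with
  | zero =>
      intro r hr
      apply Summable.of_nonneg_of_le (fun n => by positivity) ?_
        (Real.summable_pow_div_factorial r)
      intro n
      show ‖cv 0 n‖ * r ^ n ≤ r ^ n / (n.factorial : ℝ)
      have : ‖cv 0 n‖ = 1 / ((2 * n).factorial : ℝ) := by
        simp [cv, norm_div, norm_pow]
      rw [this]
      rw [div_mul_eq_mul_div, one_mul, div_le_div_iff₀ (by positivity) (by positivity)]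
      have hf : (n.factorial : ℝ) ≤ ((2 * n).factorial : ℝ) := by
        exact_mod_cast Nat.factorial_le (by omega)
      apply mul_le_mul_of_nonneg_left hf (by positivity)
  | succ l ih =>
      have heq : cv (l + 1) = fun n : ℕ => 2 * ((n : ℂ) * cv l n) - (2 * (l : ℂ) + 1) * cv l n := by
        funext n
        show (2 * (n : ℂ) - 2 * l - 1) * cv l n = _
        ring
      rw [heq]
      intro r hr
      apply Summable.of_nonneg_of_le (fun n => by positivity) ?_
        (((ih.mul_nat r hr).mul_left 2).add ((ih r hr).mul_left ‖2 * (l : ℂ) + 1‖))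
      intro n
      calc ‖2 * ((n : ℂ) * cv l n) - (2 * (l : ℂ) + 1) * cv l n‖ * r ^ n
          ≤ (‖2 * ((n : ℂ) * cv l n)‖ + ‖(2 * (l : ℂ) + 1) * cv l n‖) * r ^ n := by
            apply mul_le_mul_of_nonneg_right (norm_sub_le _ _) (by positivity)
        _ = 2 * (‖(n : ℂ) * cv l n‖ * r ^ n) + ‖2 * (l : ℂ) + 1‖ * (‖cv l n‖ * r ^ n) := by
            rw [norm_mul, norm_mul]
            norm_num
            ring

/-- Closed form of `cu`. -/
theorem cu_apply (l n : ℕ) :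
    cu l n = (-1) ^ (n + l) * 2 ^ l * ((n + l).factorial : ℂ)
      / ((n.factorial : ℂ) * ((2 * (n + l) + 1).factorial : ℂ)) := by
  induction l generalizing n with
  | zero =>
      show (-1) ^ n / ((2 * n + 1).factorial : ℂ) = _
      have h1 : (n.factorial : ℂ) ≠ 0 := Nat.cast_ne_zero.mpr (Nat.factorial_ne_zero n)
      have h3 : ((2 * (n + 0) + 1).factorial : ℂ) ≠ 0 :=
        Nat.cast_ne_zero.mpr (Nat.factorial_ne_zero _)
      rw [div_eq_div_iff (by simpa using h3) (mul_ne_zero h1 h3)]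
      simp only [Nat.add_zero, pow_zero, mul_one]
      ring
  | succ l ih =>
      show 2 * (((n : ℂ) + 1) * cu l (n + 1)) = _
      rw [ih (n + 1)]
      have e1 : n + 1 + l = n + (l + 1) := by omega
      rw [e1]
      have h1 : (n.factorial : ℂ) ≠ 0 := Nat.cast_ne_zero.mpr (Nat.factorial_ne_zero n)
      have h2 : (((n + 1).factorial : ℕ) : ℂ) ≠ 0 := Nat.cast_ne_zero.mpr (Nat.factorial_ne_zero _)
      have h3 : (((2 * (n + (l + 1)) + 1).factorial : ℕ) : ℂ) ≠ 0 :=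
        Nat.cast_ne_zero.mpr (Nat.factorial_ne_zero _)
      rw [← mul_div_assoc, ← mul_div_assoc,
        div_eq_div_iff (mul_ne_zero h2 h3) (mul_ne_zero h1 h3), Nat.factorial_succ n]
      push_cast
      ring

theorem cu_zero (l : ℕ) :
    cu l 0 = (-1) ^ l * 2 ^ l * (l.factorial : ℂ) / ((2 * l + 1).factorial : ℂ) := by
  rw [cu_apply]
  simp

theorem cv_zero (l : ℕ) :
    cv l 0 = (-1) ^ l * ((2 * l).factorial : ℂ) / (2 ^ l * (l.factorial : ℂ)) := by
  induction l with
  | zero => simp [cv]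
  | succ l ih =>
      show (2 * ((0 : ℕ) : ℂ) - 2 * l - 1) * cv l 0 = _
      rw [ih]
      have h1 : (l.factorial : ℂ) ≠ 0 := Nat.cast_ne_zero.mpr (Nat.factorial_ne_zero l)
      have h3 : (2 : ℂ) ^ l ≠ 0 := pow_ne_zero _ two_ne_zero
      have h4 : (2 : ℂ) ^ (l + 1) ≠ 0 := pow_ne_zero _ two_ne_zero
      have h5 : ((l + 1).factorial : ℂ) ≠ 0 := Nat.cast_ne_zero.mpr (Nat.factorial_ne_zero _)
      have hb : ((2 * (l + 1)).factorial : ℂ)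
          = (2 * (l : ℂ) + 2) * ((2 * (l : ℂ) + 1) * ((2 * l).factorial : ℂ)) := by
        have e1 : 2 * (l + 1) = (2 * l + 1) + 1 := by ring
        rw [e1, Nat.factorial_succ, Nat.factorial_succ]
        push_cast; ring
      have hf : (((l + 1)).factorial : ℂ) = ((l : ℂ) + 1) * (l.factorial : ℂ) := by
        rw [Nat.factorial_succ]; push_cast; ring
      rw [← mul_div_assoc, div_eq_div_iff (mul_ne_zero h3 h1) (mul_ne_zero h4 h5), hb, hf]
      push_cast
      ring

theorem cu_cv_zero (l : ℕ) : cu l 0 * cv l 0 = 1 / (2 * (l : ℂ) + 1) := by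
  rw [cu_zero, cv_zero]
  have h1 : (l.factorial : ℂ) ≠ 0 := Nat.cast_ne_zero.mpr (Nat.factorial_ne_zero l)
  have h2 : ((2 * l).factorial : ℂ) ≠ 0 := Nat.cast_ne_zero.mpr (Nat.factorial_ne_zero _)
  have h3 : (2 : ℂ) ^ l ≠ 0 := pow_ne_zero _ two_ne_zero
  have h4 : ((2 * l + 1).factorial : ℂ) = (2 * l + 1) * ((2 * l).factorial : ℂ) := by
    rw [Nat.factorial_succ]; push_cast; ring
  have h5 : (2 * (l : ℂ) + 1) ≠ 0 := by
    have : ((2 * l + 1 : ℕ) : ℂ) ≠ 0 := Nat.cast_ne_zero.mpr (by omega)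
    push_cast at this
    exact this
  have h6 : ((-1 : ℂ)) ^ l * (-1) ^ l = 1 := by
    rw [← pow_add]
    exact Even.neg_one_pow ⟨l, rfl⟩
  rw [h4]
  field_simp
  rw [sq, h6]

theorem pser_cu_succ (l : ℕ) (w : ℂ) :
    pser (cu (l + 1)) w = 2 * pser (shiftc (cu l)) w := by
  have : cu (l + 1) = fun n => 2 * shiftc (cu l) n := rfl
  rw [this, pser_smul]

theorem pser_cv_succ (l : ℕ) (w : ℂ) :
    pser (cv (l + 1)) w = 2 * (w * pser (shiftc (cv l)) w) - (2 * (l : ℂ) + 1) * pser (cv l) w := by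
  rw [pser_mul_X (entc_cv l)]
  unfold pser
  rw [← tsum_mul_left, ← tsum_mul_left,
    ← Summable.tsum_sub (((entc_cv l).mul_nat.summable w).mul_left 2) (((entc_cv l).summable w).mul_left _)]
  apply tsum_congr; intro n
  show (2 * (n : ℂ) - 2 * l - 1) * cv l n * w ^ n = _
  ring

theorem sin_eq (z : ℂ) : Complex.sin z = z * pser (cu 0) (z ^ 2) := by
  have hs2 := (((entc_cu 0).summable (z ^ 2)).hasSum).mul_left z
  have heq : (fun n : ℕ => z * (cu 0 n * (z ^ 2) ^ n))
      = fun n : ℕ => (-1) ^ n * z ^ (2 * n + 1) / ((2 * n + 1).factorial : ℂ) := by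
    funext n
    show z * ((-1) ^ n / ((2 * n + 1).factorial : ℂ) * (z ^ 2) ^ n) = _
    rw [← pow_mul]
    ring
  rw [heq] at hs2
  exact (hs2.unique (Complex.hasSum_sin z)).symm

theorem cos_eq (z : ℂ) : Complex.cos z = pser (cv 0) (z ^ 2) := by
  have hs2 : HasSum (fun n : ℕ => cv 0 n * (z ^ 2) ^ n) (pser (cv 0) (z ^ 2)) :=
    ((entc_cv 0).summable (z ^ 2)).hasSum
  have heq : (fun n : ℕ => cv 0 n * (z ^ 2) ^ n)
      = fun n : ℕ => (-1) ^ n * z ^ (2 * n) / ((2 * n).factorial : ℂ) := by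
    funext n
    show (-1) ^ n / ((2 * n).factorial : ℂ) * (z ^ 2) ^ n = _
    rw [← pow_mul]
    ring
  rw [heq] at hs2
  exact (hs2.unique (Complex.hasSum_cos z)).symm

theorem besselOp_iter_sin (l : ℕ) : ∀ z : ℂ, z ≠ 0 →
    (besselOp^[l] (fun w => Complex.sin w / w)) z = pser (cu l) (z ^ 2) := by
  induction l with
  | zero =>
      intro z hz
      simp only [Function.iterate_zero, id_eq]
      rw [sin_eq z]
      field_simp
  | succ l ih =>
      intro z hz
      rw [Function.iterate_succ_apply']
      show deriv (besselOp^[l] fun w => Complex.sin w / w) z / z = _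
      have hev : (besselOp^[l] fun w => Complex.sin w / w)
          =ᶠ[nhds z] fun w => pser (cu l) (w ^ 2) := by
        filter_upwards [IsOpen.mem_nhds isOpen_ne hz] with w hw
        exact ih w hw
      rw [hev.deriv_eq]
      have hd : HasDerivAt (fun w : ℂ => pser (cu l) (w ^ 2))
          (pser (shiftc (cu l)) (z ^ 2) * (2 * z)) z := by
        have := HasDerivAt.comp z ((entc_cu l).hasDerivAt (z ^ 2)) (hasDerivAt_pow 2 z)
        simpa [Function.comp_def] using this
      rw [hd.deriv, pser_cu_succ]
      field_simp

theorem besselOp_iter_cos (l : ℕ) : ∀ z : ℂ, z ≠ 0 →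
    (besselOp^[l] (fun w => Complex.cos w / w)) z
      = pser (cv l) (z ^ 2) / z ^ (2 * l + 1) := by
  induction l with
  | zero =>
      intro z hz
      simp only [Function.iterate_zero, id_eq]
      rw [cos_eq z]
      norm_num
  | succ l ih =>
      intro z hz
      rw [Function.iterate_succ_apply']
      show deriv (besselOp^[l] fun w => Complex.cos w / w) z / z = _
      have hev : (besselOp^[l] fun w => Complex.cos w / w)
          =ᶠ[nhds z] fun w => pser (cv l) (w ^ 2) / w ^ (2 * l + 1) := by
        filter_upwards [IsOpen.mem_nhds isOpen_ne hz] with w hw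
        exact ih w hw
      rw [hev.deriv_eq]
      have hnum : HasDerivAt (fun w : ℂ => pser (cv l) (w ^ 2))
          (pser (shiftc (cv l)) (z ^ 2) * (2 * z)) z := by
        have := HasDerivAt.comp z ((entc_cv l).hasDerivAt (z ^ 2)) (hasDerivAt_pow 2 z)
        simpa [Function.comp_def] using this
      have hden : HasDerivAt (fun w : ℂ => w ^ (2 * l + 1))
          (((2 * l + 1 : ℕ) : ℂ) * z ^ (2 * l)) z := by
        simpa using hasDerivAt_pow (2 * l + 1) z
      have hd := hnum.div hden (pow_ne_zero _ hz)
      rw [show (fun w => pser (cv l) (w ^ 2) / w ^ (2 * l + 1))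
          = ((fun w => pser (cv l) (w ^ 2)) / fun w => w ^ (2 * l + 1)) from rfl,
        hd.deriv, pser_cv_succ]
      have h1 : z ^ (2 * l + 1) ≠ 0 := pow_ne_zero _ hz
      have h2 : z ^ (2 * l) ≠ 0 := pow_ne_zero _ hz
      have h3 : z ^ (2 * (l + 1) + 1) ≠ 0 := pow_ne_zero _ hz
      field_simp
      push_cast
      ring

theorem psi_eq (l : ℕ) {z : ℂ} (hz : z ≠ 0) :
    riccatiPsi l z = (-1) ^ l * (z ^ (l + 1) * pser (cu l) (z ^ 2)) := by
  unfold riccatiPsi sphJ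
  rw [besselOp_iter_sin l z hz, neg_pow]
  ring

theorem xi_eq (l : ℕ) {z : ℂ} (hz : z ≠ 0) :
    riccatiXi l z = (-1) ^ l * (z ^ (l + 1) * pser (cu l) (z ^ 2))
      - Complex.I * (-1) ^ l * (pser (cv l) (z ^ 2) / z ^ l) := by
  unfold riccatiXi sphJ sphY
  rw [besselOp_iter_sin l z hz, besselOp_iter_cos l z hz, neg_pow]
  have h1 : z ^ l ≠ 0 := pow_ne_zero _ hz
  have h2 : z ^ (2 * l + 1) ≠ 0 := pow_ne_zero _ hz
  field_simp
  ring

theorem pser_sq_hasDerivAt (c : ℕ → ℂ) (hc : EntC c) (z : ℂ) :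
    HasDerivAt (fun w : ℂ => pser c (w ^ 2)) (pser (shiftc c) (z ^ 2) * (2 * z)) z := by
  have := HasDerivAt.comp z (hc.hasDerivAt (z ^ 2)) (hasDerivAt_pow 2 z)
  simpa [Function.comp_def] using this

theorem psi_deriv (l : ℕ) {z : ℂ} (hz : z ≠ 0) :
    deriv (riccatiPsi l) z = (-1) ^ l * (((l : ℂ) + 1) * z ^ l * pser (cu l) (z ^ 2)
      + 2 * z ^ (l + 2) * pser (shiftc (cu l)) (z ^ 2)) := by
  have hev : riccatiPsi l =ᶠ[nhds z]
      fun w => (-1) ^ l * (w ^ (l + 1) * pser (cu l) (w ^ 2)) := by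
    filter_upwards [IsOpen.mem_nhds isOpen_ne hz] with w hw
    exact psi_eq l hw
  rw [hev.deriv_eq]
  have hA : HasDerivAt (fun w : ℂ => (-1) ^ l * (w ^ (l + 1) * pser (cu l) (w ^ 2)))
      ((-1) ^ l * ((((l + 1 : ℕ)) : ℂ) * z ^ (l + 1 - 1) * pser (cu l) (z ^ 2)
        + z ^ (l + 1) * (pser (shiftc (cu l)) (z ^ 2) * (2 * z)))) z :=
    ((hasDerivAt_pow (l + 1) z).mul (pser_sq_hasDerivAt _ (entc_cu l) z)).const_mul _
  rw [hA.deriv]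
  simp only [Nat.add_sub_cancel]
  push_cast
  ring

theorem xi_deriv (l : ℕ) {z : ℂ} (hz : z ≠ 0) :
    deriv (riccatiXi l) z
      = (-1) ^ l * ((((l + 1 : ℕ)) : ℂ) * z ^ (l + 1 - 1) * pser (cu l) (z ^ 2)
          + z ^ (l + 1) * (pser (shiftc (cu l)) (z ^ 2) * (2 * z)))
        - Complex.I * (-1) ^ l *
          ((pser (shiftc (cv l)) (z ^ 2) * (2 * z) * z ^ l
            - pser (cv l) (z ^ 2) * ((l : ℂ) * z ^ (l - 1))) / (z ^ l) ^ 2) := by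
  have hev : riccatiXi l =ᶠ[nhds z] fun w =>
      (-1) ^ l * (w ^ (l + 1) * pser (cu l) (w ^ 2))
        - Complex.I * (-1) ^ l * (pser (cv l) (w ^ 2) / w ^ l) := by
    filter_upwards [IsOpen.mem_nhds isOpen_ne hz] with w hw
    exact xi_eq l hw
  rw [hev.deriv_eq]
  have hA : HasDerivAt (fun w : ℂ => (-1) ^ l * (w ^ (l + 1) * pser (cu l) (w ^ 2)))
      ((-1) ^ l * ((((l + 1 : ℕ)) : ℂ) * z ^ (l + 1 - 1) * pser (cu l) (z ^ 2)
        + z ^ (l + 1) * (pser (shiftc (cu l)) (z ^ 2) * (2 * z)))) z :=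
    ((hasDerivAt_pow (l + 1) z).mul (pser_sq_hasDerivAt _ (entc_cu l) z)).const_mul _
  have hB : HasDerivAt (fun w : ℂ => Complex.I * (-1) ^ l * (pser (cv l) (w ^ 2) / w ^ l))
      (Complex.I * (-1) ^ l *
        ((pser (shiftc (cv l)) (z ^ 2) * (2 * z) * z ^ l
          - pser (cv l) (z ^ 2) * ((l : ℂ) * z ^ (l - 1))) / (z ^ l) ^ 2)) z :=
    (((pser_sq_hasDerivAt _ (entc_cv l) z).div (hasDerivAt_pow l z)
      (pow_ne_zero l hz))).const_mul _
  exact (hA.sub hB).deriv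

/-- Entire versions of the four scaled Riccati–Bessel quantities. -/
noncomputable def Aent (l : ℕ) (z : ℂ) : ℂ :=
  (-1) ^ l * (z ^ (2 * l + 1) * pser (cu l) (z ^ 2)) - Complex.I * (-1) ^ l * pser (cv l) (z ^ 2)

noncomputable def Bent (l : ℕ) (z : ℂ) : ℂ :=
  (-1) ^ l * (((l : ℂ) + 1) * pser (cu l) (z ^ 2) + 2 * z ^ 2 * pser (shiftc (cu l)) (z ^ 2))

noncomputable def Cent (l : ℕ) (z : ℂ) : ℂ := (-1) ^ l * pser (cu l) (z ^ 2)

noncomputable def Dent (l : ℕ) (z : ℂ) : ℂ :=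
  (-1) ^ l * (((l : ℂ) + 1) * z ^ (2 * l + 1) * pser (cu l) (z ^ 2)
      + 2 * z ^ (2 * l + 3) * pser (shiftc (cu l)) (z ^ 2))
    - Complex.I * (-1) ^ l *
      (2 * z ^ 2 * pser (shiftc (cv l)) (z ^ 2) - (l : ℂ) * pser (cv l) (z ^ 2))

theorem claimA (l : ℕ) {z : ℂ} (hz : z ≠ 0) : z ^ l * riccatiXi l z = Aent l z := by
  rw [xi_eq l hz]
  unfold Aent
  have h1 : z ^ l ≠ 0 := pow_ne_zero _ hz
  field_simp
  ring

theorem claimB (l : ℕ) {z : ℂ} (hz : z ≠ 0) :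
    z ^ (-(l : ℤ)) * deriv (riccatiPsi l) z = Bent l z := by
  rw [psi_deriv l hz, zpow_neg, zpow_natCast]
  unfold Bent
  have h1 : z ^ l ≠ 0 := pow_ne_zero _ hz
  field_simp
  ring

theorem claimC (l : ℕ) {z : ℂ} (hz : z ≠ 0) :
    z ^ (-(l : ℤ) - 1) * riccatiPsi l z = Cent l z := by
  rw [psi_eq l hz]
  have he : (-(l : ℤ) - 1) = -(((l + 1 : ℕ)) : ℤ) := by push_cast; ring
  rw [he, zpow_neg, zpow_natCast]
  unfold Cent
  have h1 : z ^ (l + 1) ≠ 0 := pow_ne_zero _ hz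
  field_simp

theorem claimD (l : ℕ) (hl : 1 ≤ l) {z : ℂ} (hz : z ≠ 0) :
    z ^ (l + 1) * deriv (riccatiXi l) z = Dent l z := by
  obtain ⟨m, rfl⟩ : ∃ m, l = m + 1 := ⟨l - 1, by omega⟩
  rw [xi_deriv (m + 1) hz]
  simp only [Nat.add_sub_cancel]
  unfold Dent
  have h1 : z ^ (m + 1) ≠ 0 := pow_ne_zero _ hz
  field_simp
  push_cast
  ring

theorem Aent_zero (l : ℕ) : Aent l 0 = -(Complex.I * (-1) ^ l * cv l 0) := by
  unfold Aent
  rw [show ((0 : ℂ) ^ 2) = 0 by ring, pser_zero, pser_zero,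
    zero_pow (by omega : 2 * l + 1 ≠ 0)]
  ring

theorem Bent_zero (l : ℕ) : Bent l 0 = (-1) ^ l * (((l : ℂ) + 1) * cu l 0) := by
  unfold Bent
  rw [show ((0 : ℂ) ^ 2) = 0 by ring, pser_zero, pser_zero]
  ring

theorem Cent_zero (l : ℕ) : Cent l 0 = (-1) ^ l * cu l 0 := by
  unfold Cent
  rw [show ((0 : ℂ) ^ 2) = 0 by ring, pser_zero]

theorem Dent_zero (l : ℕ) : Dent l 0 = Complex.I * (-1) ^ l * ((l : ℂ) * cv l 0) := by
  unfold Dent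
  rw [show ((0 : ℂ) ^ 2) = 0 by ring, pser_zero, pser_zero, pser_zero, pser_zero,
    zero_pow (by omega : 2 * l + 1 ≠ 0), zero_pow (by omega : 2 * l + 3 ≠ 0)]
  ring

theorem cont_pser_sq {c : ℕ → ℂ} (hc : EntC c) : Continuous fun z : ℂ => pser c (z ^ 2) :=
  hc.differentiable.continuous.comp (continuous_pow 2)

theorem Aent_cont (l : ℕ) : Continuous (Aent l) := by
  unfold Aent
  exact (continuous_const.mul ((continuous_pow _).mul (cont_pser_sq (entc_cu l)))).sub
    (continuous_const.mul (cont_pser_sq (entc_cv l)))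

theorem Bent_cont (l : ℕ) : Continuous (Bent l) := by
  unfold Bent
  exact continuous_const.mul ((continuous_const.mul (cont_pser_sq (entc_cu l))).add
    ((continuous_const.mul (continuous_pow 2)).mul (cont_pser_sq (entc_cu l).shift)))

theorem Cent_cont (l : ℕ) : Continuous (Cent l) := by
  unfold Cent
  exact continuous_const.mul (cont_pser_sq (entc_cu l))

theorem Dent_cont (l : ℕ) : Continuous (Dent l) := by
  unfold Dent
  refine Continuous.sub ?_ ?_
  · exact continuous_const.mul
      (((continuous_const.mul (continuous_pow _)).mul (cont_pser_sq (entc_cu l))).add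
        ((continuous_const.mul (continuous_pow _)).mul (cont_pser_sq (entc_cu l).shift)))
  · exact continuous_const.mul
      (((continuous_const.mul (continuous_pow 2)).mul (cont_pser_sq (entc_cv l).shift)).sub
        (continuous_const.mul (cont_pser_sq (entc_cv l))))

end MieAux

open MieAux

/-- Leading-order pole of the Mie denominator: the function
`f_l(ε, √ε_b, k₀a) = i (k_b a)^l ξ_l(k_b a) (ka)^{-l} ψ_l′(ka) ε_b
  − i (ka)^{-l-1} ψ_l(ka) (k_b a)^{l+1} ξ_l′(k_b a) ε`
(with `ka = √ε·(k₀a)`, `k_b a = √ε_b·(k₀a)`) tends to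
`(l ε + (l+1) ε_b)/(2l+1)` as `k₀a → 0⁺`. -/
theorem mie_denominator_limit (l : ℕ) (hl : 1 ≤ l) (ε εb : ℂ) (hε : ε ≠ 0) (hεb : εb ≠ 0) :
    Tendsto (fun x : ℝ =>
        Complex.I * ((csqrt εb * x) ^ l * riccatiXi l (csqrt εb * x))
            * ((csqrt ε * x) ^ (-(l : ℤ)) * deriv (riccatiPsi l) (csqrt ε * x)) * εb
          - Complex.I * ((csqrt ε * x) ^ (-(l : ℤ) - 1) * riccatiPsi l (csqrt ε * x))
            * ((csqrt εb * x) ^ (l + 1) * deriv (riccatiXi l) (csqrt εb * x)) * ε)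
      (𝓝[>] (0 : ℝ))
      (𝓝 (((l : ℂ) * ε + ((l : ℂ) + 1) * εb) / (2 * (l : ℂ) + 1))) := by
  have hca : csqrt ε ≠ 0 := fun h => hε ((Complex.cpow_eq_zero_iff _ _).mp h).1
  have hcb : csqrt εb ≠ 0 := fun h => hεb ((Complex.cpow_eq_zero_iff _ _).mp h).1
  set F : ℂ → ℂ := fun w =>
    Complex.I * Aent l (csqrt εb * w) * Bent l (csqrt ε * w) * εb
      - Complex.I * Cent l (csqrt ε * w) * Dent l (csqrt εb * w) * ε with hF
  have hFc : Continuous F := by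
    apply Continuous.sub
    · exact ((continuous_const.mul
        ((Aent_cont l).comp (continuous_const.mul continuous_id))).mul
        ((Bent_cont l).comp (continuous_const.mul continuous_id))).mul continuous_const
    · exact ((continuous_const.mul
        ((Cent_cont l).comp (continuous_const.mul continuous_id))).mul
        ((Dent_cont l).comp (continuous_const.mul continuous_id))).mul continuous_const
  have h5 : (2 * (l : ℂ) + 1) ≠ 0 := by
    have : ((2 * l + 1 : ℕ) : ℂ) ≠ 0 := Nat.cast_ne_zero.mpr (by omega)
    push_cast at this
    exact this
  have hF0 : F 0 = ((l : ℂ) * ε + ((l : ℂ) + 1) * εb) / (2 * (l : ℂ) + 1) := by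
    have h6 : ((-1 : ℂ)) ^ l * (-1) ^ l = 1 := by
      rw [← pow_add]; exact Even.neg_one_pow ⟨l, rfl⟩
    have step : F 0 = ((l : ℂ) * ε + ((l : ℂ) + 1) * εb) * (cu l 0 * cv l 0) := by
      simp only [hF, mul_zero, Aent_zero, Bent_zero, Cent_zero, Dent_zero]
      linear_combination
        (-(((l : ℂ) * ε + ((l : ℂ) + 1) * εb) * (cu l 0 * cv l 0)) * Complex.I ^ 2) * h6
          + (-(((l : ℂ) * ε + ((l : ℂ) + 1) * εb) * (cu l 0 * cv l 0))) * Complex.I_sq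
    rw [step, cu_cv_zero, mul_one_div]
  have h0 : Tendsto (fun x : ℝ => (x : ℂ)) (𝓝[>] (0 : ℝ)) (𝓝 (0 : ℂ)) := by
    have h := Complex.continuous_ofReal.tendsto 0
    rw [Complex.ofReal_zero] at h
    exact h.mono_left nhdsWithin_le_nhds
  have hlim : Tendsto (fun x : ℝ => F (x : ℂ)) (𝓝[>] (0 : ℝ))
      (𝓝 (((l : ℂ) * ε + ((l : ℂ) + 1) * εb) / (2 * (l : ℂ) + 1))) := by
    have := (hFc.tendsto 0).comp h0
    rw [hF0] at this
    exact this
  apply hlim.congr'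
  filter_upwards [self_mem_nhdsWithin] with x hx
  have hx0 : (x : ℂ) ≠ 0 := Complex.ofReal_ne_zero.mpr (ne_of_gt hx)
  have hza : csqrt ε * (x : ℂ) ≠ 0 := mul_ne_zero hca hx0
  have hzb : csqrt εb * (x : ℂ) ≠ 0 := mul_ne_zero hcb hx0
  simp only [hF]
  rw [claimA l hzb, claimB l hza, claimC l hza, claimD l hl hzb]
end
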